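/- Suppose η : ℝ → ℝ is continuous and ∫_ξ^t η(s) ds ≥ δ₀·(t-ξ) for all 0 ≤ ξ ≤ t with δ₀ > 0. If a nonnegative differentiable function E (representing ‖W‖²) satisfies E'(t) + 2η(t)·E(t) ≤ 2G² for all t ≥ 0, where G ≥ 0 is constant, and E(0) = 0, then E(t) ≤ (1 - exp(-2δ₀·t))/δ₀ · G² for all t ≥ 0. -/

import Mathlib

open Real

theorem boundary_error_estimate
    (E η : ℝ → ℝ) (δ₀ G : ℝ)
    (hδ₀ : 0 < δ₀)
    (hη : Continuous η)
    (hθ : ∀ ξ t : ℝ, 0 ≤ ξ → ξ ≤ t → δ₀ * (t - ξ) ≤ ∫ s in ξ..t, η s)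
    (hE : Differentiable ℝ E)
    (hEpos : ∀ t ≥ (0:ℝ), 0 ≤ E t)
    (hG : 0 ≤ G)
    (hineq : ∀ t ≥ (0:ℝ), deriv E t + 2 * η t * E t ≤ 2 * G ^ 2)
    (hE0 : E 0 = 0) :
    ∀ t ≥ (0:ℝ), E t ≤ (1 - Real.exp (-2 * δ₀ * t)) / δ₀ * G ^ 2 := by
  intro t ht
  set Θ : ℝ → ℝ := fun x => ∫ s in (0:ℝ)..x, η s with hΘdef
  have hΘ : ∀ x, HasDerivAt Θ (η x) x := fun x =>
    (hη.integral_hasStrictDerivAt 0 x).hasDerivAt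
  have hΘc : Continuous Θ := by
    have : Differentiable ℝ Θ := fun x => (hΘ x).differentiableAt
    exact this.continuous
  set φ : ℝ → ℝ := fun x => Real.exp (2 * Θ x) with hφdef
  have hφc : Continuous φ := (Real.continuous_exp).comp (continuous_const.mul hΘc)
  set I : ℝ → ℝ := fun x => ∫ s in (0:ℝ)..x, φ s with hIdef
  have hI : ∀ x, HasDerivAt I (φ x) x := fun x =>
    (hφc.integral_hasStrictDerivAt 0 x).hasDerivAt
  set g : ℝ → ℝ := fun x => E x * φ x - 2 * G ^ 2 * I x with hgdef
  have hφ' : ∀ x, HasDerivAt φ (2 * η x * φ x) x := by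
    intro x
    have := ((hΘ x).const_mul 2).exp
    simpa [hφdef, mul_comm] using this
  have hg : ∀ x, HasDerivAt g ((deriv E x + 2 * η x * E x) * φ x - 2 * G ^ 2 * φ x) x := by
    intro x
    have h1 : HasDerivAt E (deriv E x) x := (hE x).hasDerivAt
    have h := (h1.mul (hφ' x)).sub ((hI x).const_mul (2 * G ^ 2))
    convert h using 1
    · rfl
    · rfl
    · rfl
    · ring
  have hmono : AntitoneOn g (Set.Ici (0:ℝ)) := by
    apply antitoneOn_of_deriv_nonpos (convex_Ici 0)
    · exact (Continuous.continuousOn (by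
        have : Differentiable ℝ g := fun x => (hg x).differentiableAt
        exact this.continuous))
    · intro x hx
      exact (hg x).differentiableAt.differentiableWithinAt
    · intro x hx
      rw [(hg x).deriv]
      have hx0 : (0:ℝ) ≤ x := le_of_lt (by simpa using hx)
      have h2 := hineq x hx0
      have hφpos : 0 < φ x := Real.exp_pos _
      nlinarith
  have hg0 : g 0 = 0 := by
    simp [hgdef, hIdef, hφdef, hΘdef, hE0]
  have hgt : g t ≤ 0 := by
    have := hmono (Set.self_mem_Ici) (Set.mem_Ici.mpr ht) ht
    simpa [hg0] using this
  -- E t * φ t ≤ 2 G^2 * I t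
  have key : E t * φ t ≤ 2 * G ^ 2 * I t := by
    have : E t * φ t - 2 * G ^ 2 * I t ≤ 0 := hgt
    linarith
  have hφtpos : 0 < φ t := Real.exp_pos _
  have hEt : E t ≤ 2 * G ^ 2 * I t * Real.exp (-(2 * Θ t)) := by
    have := mul_le_mul_of_nonneg_right key (le_of_lt (Real.exp_pos (-(2 * Θ t))))
    have hφinv : φ t * Real.exp (-(2 * Θ t)) = 1 := by
      rw [hφdef]; simp [← Real.exp_add]
    calc E t = E t * (φ t * Real.exp (-(2 * Θ t))) := by rw [hφinv]; ring
      _ = E t * φ t * Real.exp (-(2 * Θ t)) := by ring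
      _ ≤ 2 * G ^ 2 * I t * Real.exp (-(2 * Θ t)) := this
  -- rewrite I t * exp(-2Θt) as integral of exp (2 Θ s - 2 Θ t)
  have hIrw : I t * Real.exp (-(2 * Θ t)) = ∫ s in (0:ℝ)..t, Real.exp (2 * Θ s - 2 * Θ t) := by
    rw [hIdef]
    rw [← intervalIntegral.integral_mul_const]
    congr 1
    ext s
    rw [hφdef]
    rw [← Real.exp_add]
    ring_nf
  -- pointwise bound of integrand
  have hηint : ∀ a b : ℝ, IntervalIntegrable η MeasureTheory.volume a b :=
    fun a b => hη.intervalIntegrable a b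
  have hbound : ∀ s ∈ Set.Icc (0:ℝ) t,
      Real.exp (2 * Θ s - 2 * Θ t) ≤ Real.exp (2 * δ₀ * s - 2 * δ₀ * t) := by
    intro s hs
    apply Real.exp_le_exp.mpr
    have hΘdiff : Θ t - Θ s = ∫ u in s..t, η u := by
      have := intervalIntegral.integral_add_adjacent_intervals (hηint 0 s) (hηint s t)
      rw [hΘdef]
      simp only []
      linarith [this]
    have := hθ s t hs.1 hs.2
    rw [← hΘdiff] at this
    linarith
  -- compute the comparison integral
  have hcomp : (∫ s in (0:ℝ)..t, Real.exp (2 * δ₀ * s - 2 * δ₀ * t))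
      = (1 - Real.exp (-2 * δ₀ * t)) / (2 * δ₀) := by
    have hderiv : ∀ s ∈ Set.uIcc (0:ℝ) t, HasDerivAt
        (fun s => Real.exp (2 * δ₀ * s - 2 * δ₀ * t) / (2 * δ₀))
        (Real.exp (2 * δ₀ * s - 2 * δ₀ * t)) s := by
      intro s _
      have h1 : HasDerivAt (fun s : ℝ => 2 * δ₀ * s - 2 * δ₀ * t) (2 * δ₀) s := by
        simpa using ((hasDerivAt_id s).const_mul (2 * δ₀)).sub_const (2 * δ₀ * t)
      have := (h1.exp).div_const (2 * δ₀)
      convert this using 1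
      · rfl
      · rfl
      · field_simp
    have hcont : IntervalIntegrable (fun s => Real.exp (2 * δ₀ * s - 2 * δ₀ * t))
        MeasureTheory.volume 0 t := by
      apply Continuous.intervalIntegrable
      exact Real.continuous_exp.comp ((continuous_const.mul continuous_id).sub continuous_const)
    rw [intervalIntegral.integral_eq_sub_of_hasDerivAt hderiv hcont]
    have : (2 * δ₀ * t - 2 * δ₀ * t) = 0 := by ring
    rw [this]
    simp [Real.exp_zero]
    ring_nf
  -- integral monotonicity
  have hintmono : (∫ s in (0:ℝ)..t, Real.exp (2 * Θ s - 2 * Θ t))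
      ≤ ∫ s in (0:ℝ)..t, Real.exp (2 * δ₀ * s - 2 * δ₀ * t) := by
    apply intervalIntegral.integral_mono_on ht
    · apply Continuous.intervalIntegrable
      exact Real.continuous_exp.comp ((continuous_const.mul hΘc).sub continuous_const)
    · apply Continuous.intervalIntegrable
      exact Real.continuous_exp.comp ((continuous_const.mul continuous_id).sub continuous_const)
    · exact hbound
  have : E t ≤ 2 * G ^ 2 * ((1 - Real.exp (-2 * δ₀ * t)) / (2 * δ₀)) := by
    calc E t ≤ 2 * G ^ 2 * I t * Real.exp (-(2 * Θ t)) := hEt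
      _ = 2 * G ^ 2 * (I t * Real.exp (-(2 * Θ t))) := by ring
      _ = 2 * G ^ 2 * ∫ s in (0:ℝ)..t, Real.exp (2 * Θ s - 2 * Θ t) := by rw [hIrw]
      _ ≤ 2 * G ^ 2 * ∫ s in (0:ℝ)..t, Real.exp (2 * δ₀ * s - 2 * δ₀ * t) := by
          apply mul_le_mul_of_nonneg_left hintmono
          positivity
      _ = 2 * G ^ 2 * ((1 - Real.exp (-2 * δ₀ * t)) / (2 * δ₀)) := by rw [hcomp]
  calc E t ≤ 2 * G ^ 2 * ((1 - Real.exp (-2 * δ₀ * t)) / (2 * δ₀)) := this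
    _ = (1 - Real.exp (-2 * δ₀ * t)) / δ₀ * G ^ 2 := by
        field_simp
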